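/- In the Chow ring A_{d,n} of T_{d,n}, if S, T ⊆ N with |S|, |T| ≥ 2 are disjoint, T ⊊ N, then δ_S · δ_T · δ_N^{d(n-|T|)-1} = 0. -/
import Mathlib

private lemma powkill {R : Type*} [CommRing R] (x S y Rr : R) (d e : ℕ)
    (hde : d ≤ e) (hS : S = y + Rr) (hSd : S ^ d = 0)
    (hkill : ∀ j < d, x * Rr * S ^ j * y ^ (e - (j+1)) = 0) :
    x * y ^ e = 0 := by
  have key : ∀ j ≤ d, x * y ^ e = x * S ^ j * y ^ (e - j) := by
    intro j hj
    induction j with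
    | zero => simp
    | succ j ihj =>
      have h1 : e - j = (e - (j+1)) + 1 := by omega
      rw [ihj (by omega), h1, pow_add, pow_one]
      calc x * S ^ j * (y ^ (e - (j+1)) * y)
          = x * S ^ (j+1) * y ^ (e - (j+1)) - x * Rr * S ^ j * y ^ (e - (j+1)) := by
            linear_combination (-(x * S ^ j * y ^ (e - (j+1)))) * hS
        _ = x * S ^ (j+1) * y ^ (e - (j+1)) := by rw [hkill j (by omega), sub_zero]
  have hkey := key d le_rfl
  rw [hSd, mul_zero, zero_mul] at hkey
  exact hkey

private lemma arith1 (A B e j : ℕ) (h : e = A + B) (hB : j + 1 ≤ B) : A + (j+1) ≤ e := by omega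

private lemma chainmul {n : ℕ} {R : Type*} [CommRing R] (δ : Finset (Fin n) → R)
    (hrel1 : ∀ S T : Finset (Fin n), 2 ≤ S.card → 2 ≤ T.card →
      (S ∩ T).Nonempty → S ∩ T ⊂ S → S ∩ T ⊂ T → δ S * δ T = 0)
    {U V : Finset (Fin n)} (hU : 2 ≤ U.card) (hV : 2 ≤ V.card)
    {x : Fin n} (hxU : x ∈ U) (hxV : x ∈ V)
    (h1 : ¬ U ⊆ V) (h2 : ¬ V ⊆ U) : δ U * δ V = 0 := by
  apply hrel1 U V hU hV ⟨x, Finset.mem_inter.mpr ⟨hxU, hxV⟩⟩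
  · exact Finset.ssubset_iff_subset_ne.mpr
      ⟨Finset.inter_subset_left, fun h => h1 (Finset.inter_eq_left.mp h)⟩
  · exact Finset.ssubset_iff_subset_ne.mpr
      ⟨Finset.inter_subset_right, fun h => h2 (Finset.inter_eq_right.mp h)⟩

/-- `δ_U δ_N^{d(n-|U|)} = 0` for `2 ≤ |U|`, `U ⊊ N`. -/
private lemma lemL (d n : ℕ) (hd : 1 ≤ d) {R : Type*} [CommRing R] (δ : Finset (Fin n) → R)
    (hrel1 : ∀ S T : Finset (Fin n), 2 ≤ S.card → 2 ≤ T.card →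
      (S ∩ T).Nonempty → S ∩ T ⊂ S → S ∩ T ⊂ T → δ S * δ T = 0)
    (hrel2 : ∀ a b : Fin n, a ≠ b →
      (∑ S ∈ Finset.univ.filter (fun S : Finset (Fin n) => a ∈ S ∧ b ∈ S), δ S) ^ d = 0) :
    ∀ k, ∀ U : Finset (Fin n), 2 ≤ U.card → U ⊂ Finset.univ → n - U.card = k →
      δ U * δ Finset.univ ^ (d * (n - U.card)) = 0 := by
  intro k
  induction k using Nat.strong_induction_on with
  | _ k IH =>
    intro U hU hUn hk
    obtain ⟨s, -, hs⟩ := Finset.exists_of_ssubset hUn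
    obtain ⟨t, ht⟩ : U.Nonempty := Finset.card_pos.mp (by omega)
    have hst : s ≠ t := fun h => hs (h ▸ ht)
    have hUcard : U.card < n := by
      have := Finset.card_lt_card hUn
      simpa using this
    have hF : (Finset.univ : Finset (Fin n)) ∈
        Finset.univ.filter (fun V : Finset (Fin n) => s ∈ V ∧ t ∈ V) := by simp
    apply powkill (δ U)
      (∑ V ∈ Finset.univ.filter (fun V : Finset (Fin n) => s ∈ V ∧ t ∈ V), δ V)
      (δ Finset.univ)
      (∑ V ∈ (Finset.univ.filter (fun V : Finset (Fin n) => s ∈ V ∧ t ∈ V)).erase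
          Finset.univ, δ V) d
    · calc d = d * 1 := (mul_one d).symm
        _ ≤ d * (n - U.card) := Nat.mul_le_mul_left d (by omega)
    · exact (Finset.add_sum_erase _ δ hF).symm
    · exact hrel2 s t hst
    · intro j hj
      rw [Finset.mul_sum, Finset.sum_mul, Finset.sum_mul]
      refine Finset.sum_eq_zero fun V hV => ?_
      simp only [Finset.mem_erase, Finset.mem_filter] at hV
      obtain ⟨hVne, -, hsV, htV⟩ := hV
      have hVcard : 2 ≤ V.card := Finset.one_lt_card.mpr ⟨s, hsV, t, htV, hst⟩
      by_cases hUV : U ⊆ V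
      · -- U ⊊ V ⊊ N : use the inner induction hypothesis
        have hVn : V ⊂ Finset.univ := Finset.ssubset_univ_iff.mpr hVne
        have hcards : U.card < V.card :=
          Finset.card_lt_card (ssubset_of_subset_of_ne hUV (fun h => hs (h ▸ hsV)))
        have hVle : V.card ≤ n := by simpa using Finset.card_le_univ V
        have hz : δ V * δ Finset.univ ^ (d * (n - V.card)) = 0 :=
          IH (n - V.card) (by omega) V hVcard hVn rfl
        have hsplit : d * (n - U.card) = d * (n - V.card) + d * (V.card - U.card) := by
          rw [← Nat.mul_add]; congr 1; omega
        have hBd : j + 1 ≤ d * (V.card - U.card) :=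
          le_trans hj (Nat.le_mul_of_pos_right d (by omega))
        have hle : d * (n - V.card) ≤ d * (n - U.card) - (j+1) :=
          Nat.le_sub_of_add_le (arith1 _ _ _ _ hsplit hBd)
        obtain ⟨c, hc⟩ : ∃ c, d * (n - U.card) - (j+1) = d * (n - V.card) + c :=
          ⟨_, (Nat.add_sub_cancel' hle).symm⟩
        calc δ U * δ V * (∑ W ∈ Finset.univ.filter
                (fun W : Finset (Fin n) => s ∈ W ∧ t ∈ W), δ W) ^ j *
              δ Finset.univ ^ (d * (n - U.card) - (j+1))
            = (δ V * δ Finset.univ ^ (d * (n - V.card))) *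
              (δ U * (∑ W ∈ Finset.univ.filter
                (fun W : Finset (Fin n) => s ∈ W ∧ t ∈ W), δ W) ^ j *
              δ Finset.univ ^ c) := by
              rw [hc, pow_add]; ring
          _ = 0 := by rw [hz, zero_mul]
      · have h0 : δ U * δ V = 0 :=
          chainmul δ hrel1 hU hVcard ht htV hUV (fun h => hs (h hsV))
        rw [h0, zero_mul, zero_mul]

private lemma arith2 (A d : ℕ) (h : 2 * d ≤ A) (hd : 1 ≤ d) : d ≤ A - 1 := by omega

private lemma arith3 (A B C j : ℕ) (h : C = A + B) (hB : j + 2 ≤ B) :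
    A ≤ C - 1 - (j + 1) := by omega

/-- In the Chow ring `A_{d,n}` of `T_{d,n}`: if `S, T ⊆ N` with `|S|, |T| ≥ 2` are
disjoint and `T ⊊ N`, then `δ_S · δ_T · δ_N^{d(n-|T|)-1} = 0`. -/
theorem disjoint_vanishing (d n : ℕ) (hd : 1 ≤ d) (hn : 2 ≤ n)
    {R : Type*} [CommRing R] (δ : Finset (Fin n) → R)
    (hrel1 : ∀ S T : Finset (Fin n), 2 ≤ S.card → 2 ≤ T.card →
      (S ∩ T).Nonempty → S ∩ T ⊂ S → S ∩ T ⊂ T → δ S * δ T = 0)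
    (hrel2 : ∀ a b : Fin n, a ≠ b →
      (∑ S ∈ Finset.univ.filter (fun S : Finset (Fin n) => a ∈ S ∧ b ∈ S), δ S) ^ d = 0) :
    ∀ S T : Finset (Fin n), 2 ≤ S.card → 2 ≤ T.card → Disjoint S T → T ⊂ Finset.univ →
      δ S * δ T * δ Finset.univ ^ (d * (n - T.card) - 1) = 0 := by
  intro S T hS hT hST hTn
  obtain ⟨s, hsS⟩ : S.Nonempty := Finset.card_pos.mp (by omega)
  obtain ⟨t, htT⟩ : T.Nonempty := Finset.card_pos.mp (by omega)
  have hsT : s ∉ T := Finset.disjoint_left.mp hST hsS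
  have htS : t ∉ S := Finset.disjoint_right.mp hST htT
  have hst : s ≠ t := fun h => hsT (h ▸ htT)
  have hcardsum : S.card + T.card ≤ n := by
    have h1 := Finset.card_le_univ (S ∪ T)
    rw [Finset.card_union_of_disjoint hST] at h1
    simpa using h1
  have hTle : T.card ≤ n := by omega
  have hF : (Finset.univ : Finset (Fin n)) ∈
      Finset.univ.filter (fun V : Finset (Fin n) => s ∈ V ∧ t ∈ V) := by simp
  apply powkill (δ S * δ T)
    (∑ V ∈ Finset.univ.filter (fun V : Finset (Fin n) => s ∈ V ∧ t ∈ V), δ V)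
    (δ Finset.univ)
    (∑ V ∈ (Finset.univ.filter (fun V : Finset (Fin n) => s ∈ V ∧ t ∈ V)).erase
        Finset.univ, δ V) d
  · refine arith2 _ _ ?_ hd
    calc 2 * d = d * 2 := by ring
      _ ≤ d * (n - T.card) := Nat.mul_le_mul_left d (by omega)
  · exact (Finset.add_sum_erase _ δ hF).symm
  · exact hrel2 s t hst
  · intro j hj
    rw [Finset.mul_sum, Finset.sum_mul, Finset.sum_mul]
    refine Finset.sum_eq_zero fun V hV => ?_
    simp only [Finset.mem_erase, Finset.mem_filter] at hV
    obtain ⟨hVne, -, hsV, htV⟩ := hV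
    have hVcard : 2 ≤ V.card := Finset.one_lt_card.mpr ⟨s, hsV, t, htV, hst⟩
    by_cases hSV : S ⊆ V
    · by_cases hTV : T ⊆ V
      · -- S ∪ T ⊆ V ⊊ N : use lemL
        have hVn : V ⊂ Finset.univ := Finset.ssubset_univ_iff.mpr hVne
        have hVle : V.card ≤ n := by simpa using Finset.card_le_univ V
        have hcards : S.card + T.card ≤ V.card := by
          have h1 := Finset.card_le_card (Finset.union_subset hSV hTV)
          rwa [Finset.card_union_of_disjoint hST] at h1
        have hz : δ V * δ Finset.univ ^ (d * (n - V.card)) = 0 :=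
          lemL d n hd δ hrel1 hrel2 (n - V.card) V hVcard hVn rfl
        have hsplit : d * (n - T.card) = d * (n - V.card) + d * (V.card - T.card) := by
          rw [← Nat.mul_add]; congr 1; omega
        have hB2 : d * 2 ≤ d * (V.card - T.card) :=
          Nat.mul_le_mul_left d (by omega)
        have hBd : j + 2 ≤ d * (V.card - T.card) := by linarith
        have hle : d * (n - V.card) ≤ d * (n - T.card) - 1 - (j+1) :=
          arith3 _ _ _ _ hsplit hBd
        obtain ⟨c, hc⟩ : ∃ c, d * (n - T.card) - 1 - (j+1) = d * (n - V.card) + c :=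
          ⟨_, (Nat.add_sub_cancel' hle).symm⟩
        calc δ S * δ T * δ V * (∑ W ∈ Finset.univ.filter
              (fun W : Finset (Fin n) => s ∈ W ∧ t ∈ W), δ W) ^ j *
            δ Finset.univ ^ (d * (n - T.card) - 1 - (j+1))
            = (δ V * δ Finset.univ ^ (d * (n - V.card))) *
              (δ S * δ T * (∑ W ∈ Finset.univ.filter
                (fun W : Finset (Fin n) => s ∈ W ∧ t ∈ W), δ W) ^ j *
              δ Finset.univ ^ c) := by
              rw [hc, pow_add]; ring
          _ = 0 := by rw [hz, zero_mul]
      · have h0 : δ T * δ V = 0 :=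
          chainmul δ hrel1 hT hVcard htT htV hTV (fun h => hsT (h hsV))
        calc δ S * δ T * δ V * (∑ W ∈ Finset.univ.filter
              (fun W : Finset (Fin n) => s ∈ W ∧ t ∈ W), δ W) ^ j *
            δ Finset.univ ^ (d * (n - T.card) - 1 - (j+1))
            = (δ T * δ V) * (δ S * (∑ W ∈ Finset.univ.filter
                (fun W : Finset (Fin n) => s ∈ W ∧ t ∈ W), δ W) ^ j *
              δ Finset.univ ^ (d * (n - T.card) - 1 - (j+1))) := by ring
          _ = 0 := by rw [h0, zero_mul]
    · have h0 : δ S * δ V = 0 :=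
        chainmul δ hrel1 hS hVcard hsS hsV hSV (fun h => htS (h htV))
      calc δ S * δ T * δ V * (∑ W ∈ Finset.univ.filter
            (fun W : Finset (Fin n) => s ∈ W ∧ t ∈ W), δ W) ^ j *
          δ Finset.univ ^ (d * (n - T.card) - 1 - (j+1))
          = (δ S * δ V) * (δ T * (∑ W ∈ Finset.univ.filter
              (fun W : Finset (Fin n) => s ∈ W ∧ t ∈ W), δ W) ^ j *
            δ Finset.univ ^ (d * (n - T.card) - 1 - (j+1))) := by ring
        _ = 0 := by rw [h0, zero_mul]
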